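/- If Q is a cyclic subgroup separable group, then for every a ∈ Q the double coset ⟨(a,1)⟩D is closed in the profinite topology on Q × Q, where D is the diagonal subgroup of Q × Q. -/

import Mathlib

open Pointwise

/-- A subset `S` of a group is closed in the profinite topology. -/
def ProfClosed {G : Type*} [Group G] (S : Set G) : Prop :=
  ∀ x ∉ S, ∃ N : Subgroup G, N.Normal ∧ N.FiniteIndex ∧ ∀ n ∈ N, x * n ∉ S

/-- A group is cyclic subgroup separable if every cyclic subgroup is closed in the
profinite topology. -/
def CyclicSubgroupSeparable (Q : Type*) [Group Q] : Prop :=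
  ∀ g : Q, ProfClosed (↑(Subgroup.zpowers g) : Set Q)

lemma mem_cyc_diag {Q : Type*} [Group Q] (a : Q) (x : Q × Q) :
    x ∈ ((↑(Subgroup.zpowers ((a, (1 : Q)))) : Set (Q × Q))
        * {q : Q × Q | q.1 = q.2}) ↔ x.1 * x.2⁻¹ ∈ Subgroup.zpowers a := by
  constructor
  · rintro ⟨p, hp, q, hq, rfl⟩
    obtain ⟨n, rfl⟩ := hp
    simp only [Set.mem_setOf_eq] at hq
    have : ((a, (1 : Q)) ^ n) = (a ^ n, (1 : Q)) := by
      simp [Prod.pow_mk]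
    simp only [this, Prod.fst_mul, Prod.snd_mul]
    rw [hq]
    simp only [one_mul, mul_inv_cancel_right]
    exact ⟨n, rfl⟩
  · rintro ⟨n, hn⟩
    refine ⟨(a, 1) ^ n, Subgroup.zpow_mem _ (Subgroup.mem_zpowers _) n, (x.2, x.2), rfl, ?_⟩
    have : ((a, (1 : Q)) ^ n) = (a ^ n, (1 : Q)) := by simp [Prod.pow_mk]
    rw [this]
    ext
    · simp [hn]
    · simp

theorem cyclic_mul_diagonal_closed {Q : Type*} [Group Q] (hQ : CyclicSubgroupSeparable Q) :
    ∀ a : Q,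
      ProfClosed ((↑(Subgroup.zpowers ((a, (1 : Q)))) : Set (Q × Q))
        * {q : Q × Q | q.1 = q.2}) := by
  intro a x hx
  rw [mem_cyc_diag] at hx
  obtain ⟨N, hN, hNfi, hNsep⟩ := hQ a (x.1 * x.2⁻¹) hx
  refine ⟨N.prod N, ?_, ?_, ?_⟩
  · haveI := hN; exact Subgroup.prod_normal N N
  · constructor
    rw [Subgroup.index_prod]
    exact Nat.mul_ne_zero hNfi.index_ne_zero hNfi.index_ne_zero
  · rintro ⟨n1, n2⟩ ⟨hn1, hn2⟩
    rw [mem_cyc_diag]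
    have key : (x * (n1, n2)).1 * (x * (n1, n2)).2⁻¹
        = (x.1 * x.2⁻¹) * (x.2 * (n1 * n2⁻¹) * x.2⁻¹) := by
      simp only [Prod.fst_mul, Prod.snd_mul]
      group
    rw [key]
    exact hNsep _ (hN.conj_mem _ (N.mul_mem hn1 (N.inv_mem hn2)) _)
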